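/- arXiv:1205.1773 — 4 statements merged into one kernel-verified Lean document; each statement's English description precedes it below -/
import Mathlib

section
/- Let K be a field of characteristic 0, and let E ⊆ K^2 be a finite set of points such that E is contained in the union of m distinct 'vertical lines' L_1, ..., L_m (lines of the form x = c_i with the c_i distinct), and #(E ∩ L_i) ≤ i for each i = 1,...,m. Then the points of E impose independent conditions on polynomials of degree at most m-1 in K[x,y]: the space of polynomials of total degree ≤ m-1 vanishing on E has dimension binomial(m+1, 2) - #E. -/
set_option maxHeartbeats 1000000
set_option synthInstance.maxHeartbeats 400000

open MvPolynomial
open scoped Classical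

private lemma card_le_pairs_aux (D : ℕ) :
    Nat.card {p : ℕ × ℕ // p.1 + p.2 ≤ D} = (D + 2).choose 2 := by
  classical
  set T : Finset (ℕ × ℕ) := (Finset.range (D+1)).biUnion (fun k => Finset.HasAntidiagonal.antidiagonal k) with hT
  have hmem : ∀ p : ℕ × ℕ, p ∈ T ↔ p.1 + p.2 ≤ D := by
    intro p
    simp only [hT, Finset.mem_biUnion, Finset.HasAntidiagonal.mem_antidiagonal, Finset.mem_range,
      Nat.lt_succ_iff]
    constructor
    · rintro ⟨k, hk, rfl⟩; exact hk
    · intro h; exact ⟨p.1 + p.2, h, rfl⟩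
  have e : {p : ℕ × ℕ // p.1 + p.2 ≤ D} ≃ {p : ℕ × ℕ // p ∈ T} :=
    Equiv.subtypeEquivRight (fun p => (hmem p).symm)
  rw [Nat.card_congr e, Nat.card_eq_finsetCard]
  have hdisj : ∀ k ∈ Finset.range (D+1), ∀ l ∈ Finset.range (D+1), k ≠ l →
      Disjoint (Finset.HasAntidiagonal.antidiagonal k) (Finset.HasAntidiagonal.antidiagonal l) := by
    intro k _ l _ hkl
    simp only [Finset.disjoint_left, Finset.HasAntidiagonal.mem_antidiagonal]
    rintro ⟨a, b⟩ rfl h; exact hkl h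
  rw [hT, Finset.card_biUnion hdisj]
  simp only [Finset.Nat.card_antidiagonal]
  have h2 : ∑ k ∈ Finset.range (D+1), (k+1) = ∑ k ∈ Finset.range (D+2), k := by
    rw [Finset.sum_range_succ' (fun k => k) (D+1)]; simp
  rw [h2, Finset.sum_range_id, Nat.choose_two_right]

private lemma finrank_rtd (K : Type*) [Field K] (D : ℕ) :
    Module.finrank K (restrictTotalDegree (Fin 2) K D) = (D + 2).choose 2 := by
  classical
  have hb := MvPolynomial.basisRestrictSupport K { n : Fin 2 →₀ ℕ | (n.sum fun _ e => e) ≤ D }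
  have h1 : Module.finrank K (restrictTotalDegree (Fin 2) K D)
      = Nat.card { n : Fin 2 →₀ ℕ | (n.sum fun _ e => e) ≤ D } := by
    rw [show restrictTotalDegree (Fin 2) K D
        = restrictSupport K { n : Fin 2 →₀ ℕ | (n.sum fun _ e => e) ≤ D } from rfl,
      Module.finrank_eq_nat_card_basis hb]
  have e : { n : Fin 2 →₀ ℕ | (n.sum fun _ e => e) ≤ D } ≃ {p : ℕ × ℕ // p.1 + p.2 ≤ D} := by
    refine Equiv.subtypeEquiv ((Finsupp.equivFunOnFinite).trans (finTwoArrowEquiv ℕ)) ?_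
    intro n
    simp [Finsupp.sum_fintype, Fin.sum_univ_two, finTwoArrowEquiv]
  rw [h1, Nat.card_congr e, card_le_pairs_aux]

/-- The space of polynomials in `n` variables of total degree at most `D`
vanishing at every point of `E ⊆ K^n`. -/
noncomputable def vanishSpace (K : Type*) [Field K] (n D : ℕ)
    (E : Set (Fin n → K)) : Submodule K (MvPolynomial (Fin n) K) :=
  MvPolynomial.restrictTotalDegree (Fin n) K D ⊓
    ⨅ x ∈ E, LinearMap.ker (MvPolynomial.aeval (R := K) x).toLinearMap

/-- Proposition ("af", condition "yes", affine version): if a finite set `E ⊆ K^2` lies on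
`m` distinct vertical lines `x = c_i` with at most `i` points of `E` on the `i`-th line,
then `E` imposes independent conditions on polynomials of degree at most `m-1`:
the vanishing space has dimension `C(m+1,2) - #E`. -/
theorem scrambled_rows_impose_independent_conditions {K : Type*} [Field K] [CharZero K]
    (m : ℕ) (hm : 1 ≤ m) (c : Fin m → K) (hc : Function.Injective c)
    (E : Finset (Fin 2 → K))
    (hEL : ∀ x ∈ E, ∃ i : Fin m, x 0 = c i)
    (hcard : ∀ i : Fin m, (E.filter (fun x => x 0 = c i)).card ≤ (i : ℕ) + 1) :
    Module.finrank K ↥(vanishSpace K 2 (m - 1) (E : Set (Fin 2 → K))) =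
      (m + 1).choose 2 - E.card := by
  classical
  set D := m - 1 with hD
  set V := restrictTotalDegree (Fin 2) K D with hV
  -- the evaluation map
  set Φ : V →ₗ[K] ({x // x ∈ E} → K) :=
    LinearMap.pi (fun x => (MvPolynomial.aeval (R := K) x.1).toLinearMap.comp V.subtype) with hΦ
  have hΦapp : ∀ (f : V) (x : {x // x ∈ E}), Φ f x = MvPolynomial.aeval x.1 (f : MvPolynomial (Fin 2) K) := by
    intro f x; rfl
  -- line index of a point of E
  have hind : ∀ x : {x // x ∈ E}, ∃ i : Fin m, x.1 0 = c i := fun x => hEL x.1 x.2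
  set ind : {x // x ∈ E} → Fin m := fun x => (hind x).choose with hindd
  have hindspec : ∀ x : {x // x ∈ E}, x.1 0 = c (ind x) := fun x => (hind x).choose_spec
  -- the separating polynomials
  set f : {x // x ∈ E} → MvPolynomial (Fin 2) K := fun x =>
    (∏ j ∈ Finset.Ioi (ind x), (X 0 - C (c j))) *
    (∏ y ∈ (E.filter (fun y => y 0 = c (ind x))).erase x.1, (X 1 - C (y 1))) with hf
  -- degree bound
  have hdeg : ∀ x, f x ∈ V := by
    intro x
    rw [hV, mem_restrictTotalDegree]
    have h1 : (∏ j ∈ Finset.Ioi (ind x), (X 0 - C (c j) : MvPolynomial (Fin 2) K)).totalDegree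
        ≤ (Finset.Ioi (ind x)).card := by
      refine le_trans (totalDegree_finset_prod _ _) ?_
      calc ∑ j ∈ Finset.Ioi (ind x), (X 0 - C (c j) : MvPolynomial (Fin 2) K).totalDegree
          ≤ ∑ _j ∈ Finset.Ioi (ind x), 1 := by
            refine Finset.sum_le_sum (fun j _ => ?_)
            refine le_trans (totalDegree_sub _ _) ?_
            simp [totalDegree_X]
        _ = (Finset.Ioi (ind x)).card := by simp
    have h2 : (∏ y ∈ (E.filter (fun y => y 0 = c (ind x))).erase x.1,
        (X 1 - C (y 1) : MvPolynomial (Fin 2) K)).totalDegree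
        ≤ ((E.filter (fun y => y 0 = c (ind x))).erase x.1).card := by
      refine le_trans (totalDegree_finset_prod _ _) ?_
      calc ∑ y ∈ (E.filter (fun y => y 0 = c (ind x))).erase x.1,
            (X 1 - C (y 1) : MvPolynomial (Fin 2) K).totalDegree
          ≤ ∑ _y ∈ (E.filter (fun y => y 0 = c (ind x))).erase x.1, 1 := by
            refine Finset.sum_le_sum (fun y _ => ?_)
            refine le_trans (totalDegree_sub _ _) ?_
            simp [totalDegree_X]
        _ = _ := by simp
    have hc1 : (Finset.Ioi (ind x)).card = m - 1 - (ind x : ℕ) := Fin.card_Ioi _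
    have hxmem : x.1 ∈ E.filter (fun y => y 0 = c (ind x)) := by
      simp [Finset.mem_filter, x.2, hindspec x]
    have hc2 : ((E.filter (fun y => y 0 = c (ind x))).erase x.1).card ≤ (ind x : ℕ) := by
      rw [Finset.card_erase_of_mem hxmem]
      exact Nat.sub_le_iff_le_add.mpr (hcard (ind x))
    refine le_trans (totalDegree_mul _ _) ?_
    have hlt : (ind x : ℕ) < m := (ind x).2
    refine le_trans (add_le_add h1 h2) ?_
    rw [hc1, hD]
    refine le_trans (Nat.add_le_add_left hc2 _) ?_
    exact le_of_eq (Nat.sub_add_cancel (Nat.le_sub_one_of_lt hlt))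
  -- evaluation of f x at a point y
  have heval : ∀ (x : {x // x ∈ E}) (y : Fin 2 → K),
      MvPolynomial.aeval y (f x) =
        (∏ j ∈ Finset.Ioi (ind x), (y 0 - c j)) *
        (∏ z ∈ (E.filter (fun z => z 0 = c (ind x))).erase x.1, (y 1 - z 1)) := by
    intro x y
    simp [hf, map_prod, map_sub]
  -- nonvanishing at x
  have hfx : ∀ x : {x // x ∈ E}, MvPolynomial.aeval x.1 (f x) ≠ 0 := by
    intro x
    rw [heval]
    refine mul_ne_zero ?_ ?_
    · refine Finset.prod_ne_zero_iff.mpr (fun j hj => ?_)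
      rw [hindspec x]
      intro h
      have h2 : c (ind x) = c j := by linear_combination h
      exact absurd (hc h2) (ne_of_lt (Finset.mem_Ioi.mp hj))
    · refine Finset.prod_ne_zero_iff.mpr (fun z hz => ?_)
      intro h
      have hz1 : z 1 = x.1 1 := by linear_combination -h
      rw [Finset.mem_erase, Finset.mem_filter] at hz
      have hz0 : z 0 = x.1 0 := by rw [hz.2.2, hindspec x]
      have : z = x.1 := by
        funext i
        fin_cases i
        · exact hz0
        · exact hz1
      exact hz.1 this
  -- vanishing at other points with larger or equal index
  have hfvan : ∀ (x y : {x // x ∈ E}), y ≠ x → ind x ≤ ind y →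
      MvPolynomial.aeval y.1 (f x) = 0 := by
    intro x y hyx hle
    rw [heval]
    rcases lt_or_eq_of_le hle with hlt | heq
    · refine mul_eq_zero_of_left ?_ _
      refine Finset.prod_eq_zero (Finset.mem_Ioi.mpr hlt) ?_
      rw [hindspec y]; ring
    · refine mul_eq_zero_of_right _ ?_
      have hymem : y.1 ∈ (E.filter (fun z => z 0 = c (ind x))).erase x.1 := by
        rw [Finset.mem_erase, Finset.mem_filter]
        refine ⟨fun h => hyx (Subtype.ext h), y.2, ?_⟩
        rw [hindspec y, heq]
      exact Finset.prod_eq_zero hymem (by ring)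
  -- the evaluated family is linearly independent
  set g : {x // x ∈ E} → ({x // x ∈ E} → K) := fun x => Φ ⟨f x, hdeg x⟩ with hg
  have hgli : LinearIndependent K g := by
    rw [Fintype.linearIndependent_iff]
    intro a ha
    by_contra hne
    push_neg at hne
    obtain ⟨x₀, hx₀⟩ := hne
    have hS : (Finset.univ.filter (fun x => a x ≠ 0)).Nonempty := ⟨x₀, by simp [hx₀]⟩
    obtain ⟨y, hyS, hymax⟩ := Finset.exists_max_image _ (fun x => (ind x : ℕ)) hS
    rw [Finset.mem_filter] at hyS
    have hay : a y ≠ 0 := hyS.2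
    have h0 : (∑ x, a x • g x) y = 0 := by rw [ha]; rfl
    simp only [Finset.sum_apply, Pi.smul_apply, smul_eq_mul] at h0
    have hsum : ∑ x, a x * g x y = a y * g y y := by
      refine Finset.sum_eq_single y (fun x _ hxy => ?_) (by simp)
      by_cases hax : a x = 0
      · rw [hax, zero_mul]
      · have hxS : x ∈ Finset.univ.filter (fun x => a x ≠ 0) := by simp [hax]
        have hle : (ind x : ℕ) ≤ (ind y : ℕ) := hymax x hxS
        have : g x y = 0 := hfvan x y (fun h => hxy h.symm) (by exact_mod_cast hle)
        rw [this, mul_zero]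
    rw [hsum] at h0
    have : g y y ≠ 0 := hfx y
    exact hay ((mul_eq_zero.mp h0).resolve_right this)
  -- finrank of V
  have hVrank : Module.finrank K V = (m + 1).choose 2 := by
    rw [hV, finrank_rtd, hD]
    congr 1
    omega
  -- Φ is surjective
  have hcardE : Fintype.card {x // x ∈ E} = E.card := Fintype.card_coe E
  have hsurj : LinearMap.range Φ = ⊤ := by
    rcases E.eq_empty_or_nonempty with rfl | hEne
    · refine top_unique ?_
      intro v _
      refine ⟨0, ?_⟩
      funext x
      exact (Finset.notMem_empty _ x.2).elim
    · have : Nonempty {x // x ∈ E} := ⟨⟨hEne.choose, hEne.choose_spec⟩⟩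
      have hspan : Submodule.span K (Set.range g) = ⊤ :=
        hgli.span_eq_top_of_card_eq_finrank
          (by rw [Module.finrank_fintype_fun_eq_card, hcardE])
      refine top_unique ?_
      rw [← hspan]
      refine Submodule.span_le.mpr ?_
      rintro _ ⟨x, rfl⟩
      exact ⟨⟨f x, hdeg x⟩, rfl⟩
  -- rank-nullity
  have hfd : FiniteDimensional K V := by infer_instance
  have hrn := LinearMap.finrank_range_add_finrank_ker Φ
  rw [hsurj] at hrn
  have htop : Module.finrank K (⊤ : Submodule K ({x // x ∈ E} → K)) = E.card := by
    rw [finrank_top, Module.finrank_fintype_fun_eq_card, hcardE]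
  rw [htop, hVrank] at hrn
  -- identify vanishSpace with the kernel of Φ
  have hvs : vanishSpace K 2 (m - 1) (E : Set (Fin 2 → K))
      = Submodule.map V.subtype (LinearMap.ker Φ) := by
    ext p
    simp only [vanishSpace, Submodule.mem_inf, Submodule.mem_iInf, LinearMap.mem_ker,
      Submodule.mem_map, Submodule.coe_subtype]
    constructor
    · rintro ⟨hpV, hpW⟩
      refine ⟨⟨p, hpV⟩, ?_, rfl⟩
      funext x
      have := hpW x.1 x.2
      simpa [hΦapp] using this
    · rintro ⟨⟨q, hq⟩, hker, rfl⟩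
      refine ⟨hq, fun x hx => ?_⟩
      have := congrFun hker ⟨x, hx⟩
      simpa [hΦapp] using this
  have hker_rank : Module.finrank K (LinearMap.ker Φ) =
      Module.finrank K ↥(vanishSpace K 2 (m - 1) (E : Set (Fin 2 → K))) := by
    rw [hvs]
    exact (Submodule.equivMapOfInjective V.subtype (Submodule.injective_subtype V)
      (LinearMap.ker Φ)).finrank_eq
  rw [← hker_rank]
  omega
end

section
/- Let K be a field of characteristic 0, E ⊆ K^2 finite, m ≥ 1, and suppose there exist k < m distinct parallel lines R_1, ..., R_k in K^2 such that #(E ∩ (R_1 ∪ ... ∪ R_k)) > binomial(m+1, 2) - binomial(m+1-k, 2). Then E fails to impose independent conditions on polynomials of degree at most m-1: the space of polynomials of total degree ≤ m-1 vanishing on E has dimension strictly greater than max(binomial(m+1,2) - #E, 0), assuming #E ≤ binomial(m+1,2). -/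
open MvPolynomial
open scoped Classical

section Aux

variable {K : Type*} [Field K] {M : Type*} [AddCommGroup M] [Module K M]

/-- Cutting a finite-dimensional space with the kernel of one functional drops
the dimension by at most one. -/
lemma finrank_le_inf_ker_add_one (T : Submodule K M) [FiniteDimensional K T]
    (ψ : M →ₗ[K] K) :
    Module.finrank K T ≤ Module.finrank K ↥(T ⊓ LinearMap.ker ψ) + 1 := by
  set f : T →ₗ[K] K := ψ.comp T.subtype with hf
  have hker : (LinearMap.ker f).map T.subtype = T ⊓ LinearMap.ker ψ := by
    ext x
    constructor
    · rintro ⟨⟨y, hy⟩, h0, rfl⟩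
      exact ⟨hy, h0⟩
    · rintro ⟨hx, h0⟩
      exact ⟨⟨x, hx⟩, h0, rfl⟩
  have h1 : Module.finrank K ↥(LinearMap.ker f)
      = Module.finrank K ↥(T ⊓ LinearMap.ker ψ) := by
    rw [← hker]
    exact (Submodule.finrank_map_subtype_eq T _).symm
  have h2 := LinearMap.finrank_range_add_finrank_ker f
  have h3 : Module.finrank K ↥(LinearMap.range f) ≤ 1 := by
    simpa using (Submodule.finrank_le (LinearMap.range f))
  omega

/-- Cutting a finite-dimensional space with the kernels of the functionals attached to a
finite set of points drops the dimension by at most the cardinality of the set. -/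
lemma finrank_le_inf_iInf_ker_add_card {X : Type*} (S : Submodule K M)
    [FiniteDimensional K S] (φ : X → (M →ₗ[K] K)) (s : Finset X) :
    Module.finrank K S ≤
      Module.finrank K ↥(S ⊓ ⨅ x ∈ s, LinearMap.ker (φ x)) + s.card := by
  classical
  induction s using Finset.induction_on with
  | empty =>
      have h0 : (S ⊓ ⨅ x ∈ (∅ : Finset X), LinearMap.ker (φ x)) = S := by
        simp
      rw [h0]
      simp
  | @insert a s ha ih =>
      have hrw : (S ⊓ ⨅ x ∈ insert a s, LinearMap.ker (φ x))
          = (S ⊓ ⨅ x ∈ s, LinearMap.ker (φ x)) ⊓ LinearMap.ker (φ a) := by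
        rw [Finset.iInf_insert]
        rw [inf_comm (LinearMap.ker (φ a)) _, ← inf_assoc]
      haveI : FiniteDimensional K ↥(S ⊓ ⨅ x ∈ s, LinearMap.ker (φ x)) :=
        Submodule.finiteDimensional_of_le inf_le_left
      have hstep := finrank_le_inf_ker_add_one (S ⊓ ⨅ x ∈ s, LinearMap.ker (φ x)) (φ a)
      rw [Finset.card_insert_of_notMem ha, hrw]
      omega

end Aux

section Count

variable {K : Type*} [Field K]

/-- The index set for monomials `X^j Y^(t-j)` with `j ≤ t ≤ D`. -/
private def monIdx (D : ℕ) : Finset (Σ _ : ℕ, ℕ) :=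
  (Finset.range (D + 1)).sigma fun t => Finset.range (t + 1)

private lemma monIdx_card (D : ℕ) : (monIdx D).card = (D + 2).choose 2 := by
  have h1 : (monIdx D).card = ∑ t ∈ Finset.range (D + 1), (t + 1) := by
    simp [monIdx, Finset.card_sigma]
  have h2 : ∑ i ∈ Finset.range (D + 2), i = ∑ t ∈ Finset.range (D + 1), (t + 1) := by
    rw [Finset.sum_range_succ' (fun i => i) (D + 1)]; simp
  rw [h1, ← h2, Finset.sum_range_id, ← Nat.choose_two_right]

/-- The exponent finsupp of the monomial indexed by `⟨t, j⟩`. -/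
private noncomputable def monExp (q : Σ _ : ℕ, ℕ) : Fin 2 →₀ ℕ :=
  Finsupp.single 0 q.2 + Finsupp.single 1 (q.1 - q.2)

private lemma monExp_apply0 (q : Σ _ : ℕ, ℕ) : monExp q 0 = q.2 := by
  simp [monExp, Finsupp.single_apply]

private lemma monExp_apply1 (q : Σ _ : ℕ, ℕ) : monExp q 1 = q.1 - q.2 := by
  simp [monExp, Finsupp.single_apply]

private lemma monExp_sum {D : ℕ} {q : Σ _ : ℕ, ℕ} (hq : q ∈ monIdx D) :
    (monExp q).sum (fun _ e => e) ≤ D := by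
  simp only [monIdx, Finset.mem_sigma, Finset.mem_range] at hq
  have h : (monExp q).sum (fun _ e => e) = q.2 + (q.1 - q.2) := by
    classical
    rw [monExp, Finsupp.sum_add_index' (fun _ => rfl) (fun _ _ _ => rfl),
      Finsupp.sum_single_index rfl, Finsupp.sum_single_index rfl]
  omega

private lemma monExp_injOn {D : ℕ} : ∀ q ∈ monIdx D, ∀ r ∈ monIdx D,
    monExp q = monExp r → q = r := by
  intro q hq r hr h
  simp only [monIdx, Finset.mem_sigma, Finset.mem_range] at hq hr
  have h0 : q.2 = r.2 := by
    rw [← monExp_apply0 q, ← monExp_apply0 r, h]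
  have h1 : q.1 - q.2 = r.1 - r.2 := by
    rw [← monExp_apply1 q, ← monExp_apply1 r, h]
  have : q.1 = r.1 := by omega
  exact Sigma.ext this (by simp [h0])

end Count

section LowerBound

variable {K : Type*} [Field K]

/-- Multiplying by a nonzero polynomial of degree at most `k` that vanishes on `E₁`
shows that the vanishing space of degree `D + k` has dimension at least `C(D+2,2)`. -/
lemma choose_le_finrank_vanishSpace (D k : ℕ) (P : MvPolynomial (Fin 2) K)
    (hP : P ≠ 0) (hPdeg : P.totalDegree ≤ k) (E₁ : Finset (Fin 2 → K))
    (hvan : ∀ x ∈ E₁, MvPolynomial.aeval x P = 0) :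
    (D + 2).choose 2 ≤
      Module.finrank K ↥(vanishSpace K 2 (D + k) (E₁ : Set (Fin 2 → K))) := by
  classical
  set V := vanishSpace K 2 (D + k) (E₁ : Set (Fin 2 → K)) with hV
  haveI : FiniteDimensional K V :=
    Submodule.finiteDimensional_of_le (inf_le_left :
      V ≤ MvPolynomial.restrictTotalDegree (Fin 2) K (D + k))
  -- the linearly independent family
  set v : ↥(monIdx D) → MvPolynomial (Fin 2) K :=
    fun q => P * MvPolynomial.monomial (monExp q.1) 1 with hv
  have hg : Function.Injective (fun q : ↥(monIdx D) => monExp q.1) := by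
    rintro ⟨q, hq⟩ ⟨r, hr⟩ h
    exact Subtype.ext (monExp_injOn q hq r hr h)
  have hmono : LinearIndependent K
      (fun q : ↥(monIdx D) =>
        (MvPolynomial.monomial (monExp q.1) (1 : K))) := by
    have := (MvPolynomial.basisMonomials (Fin 2) K).linearIndependent.comp _ hg
    simpa [MvPolynomial.coe_basisMonomials, Function.comp_def] using this
  have hmul : LinearMap.ker (LinearMap.mulLeft K P) = ⊥ := by
    rw [LinearMap.ker_eq_bot]
    intro x y hxy
    simp only [LinearMap.mulLeft_apply] at hxy
    exact mul_left_cancel₀ hP hxy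
  have hli : LinearIndependent K v := by
    have := hmono.map' (LinearMap.mulLeft K P) hmul
    simpa [hv, Function.comp_def] using this
  -- every member of the family lies in `V`
  have hmem : ∀ q, v q ∈ V := by
    rintro ⟨q, hq⟩
    simp only [hv]
    refine Submodule.mem_inf.mpr ⟨?_, ?_⟩
    · rw [MvPolynomial.mem_restrictTotalDegree]
      refine le_trans (MvPolynomial.totalDegree_mul _ _) ?_
      have h1 : (MvPolynomial.monomial (monExp q) (1 : K)).totalDegree ≤ D := by
        rw [MvPolynomial.totalDegree_monomial _ (one_ne_zero)]
        exact monExp_sum hq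
      omega
    · simp only [Submodule.mem_iInf, LinearMap.mem_ker, AlgHom.toLinearMap_apply]
      intro x hx
      rw [Finset.mem_coe] at hx
      rw [map_mul, hvan x hx, zero_mul]
  have hspan : Submodule.span K (Set.range v) ≤ V := by
    rw [Submodule.span_le]
    rintro _ ⟨q, rfl⟩
    exact hmem q
  have hcard : Module.finrank K ↥(Submodule.span K (Set.range v))
      = (monIdx D).card := by
    rw [finrank_span_eq_card hli, Fintype.card_coe]
  calc (D + 2).choose 2 = (monIdx D).card := (monIdx_card D).symm
    _ = Module.finrank K ↥(Submodule.span K (Set.range v)) := hcard.symm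
    _ ≤ Module.finrank K V := Submodule.finrank_mono hspan

end LowerBound

/-- Proposition ("af", condition "no", affine version): if `#E ≤ C(m+1,2)` and more than
`C(m+1,2) - C(m+1-k,2)` points of `E` lie on a union of `k < m` distinct parallel lines
`{α x + β y = c_i}`, then `E` fails to impose independent conditions on polynomials of
degree at most `m-1`: the vanishing space has dimension strictly greater than
`C(m+1,2) - #E`. -/
theorem too_many_points_on_parallel_lines_special {K : Type*} [Field K] [CharZero K]
    (m k : ℕ) (hm : 1 ≤ m) (hk : k < m)
    (α β : K) (hαβ : α ≠ 0 ∨ β ≠ 0)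
    (c : Fin k → K) (hc : Function.Injective c)
    (E : Finset (Fin 2 → K)) (hEcard : E.card ≤ (m + 1).choose 2)
    (hbig : (m + 1).choose 2 - (m + 1 - k).choose 2 <
      (E.filter (fun x => ∃ i : Fin k, α * x 0 + β * x 1 = c i)).card) :
    (m + 1).choose 2 - E.card <
      Module.finrank K ↥(vanishSpace K 2 (m - 1) (E : Set (Fin 2 → K))) := by
  classical
  set E₁ : Finset (Fin 2 → K) :=
    E.filter (fun x => ∃ i : Fin k, α * x 0 + β * x 1 = c i) with hE₁
  -- the product of the linear forms
  set L : Fin k → MvPolynomial (Fin 2) K :=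
    fun i => MvPolynomial.C α * MvPolynomial.X 0 + MvPolynomial.C β * MvPolynomial.X 1
      - MvPolynomial.C (c i) with hL
  set P : MvPolynomial (Fin 2) K := ∏ i, L i with hP
  have hLval : ∀ (i : Fin k) (x : Fin 2 → K),
      MvPolynomial.aeval x (L i) = α * x 0 + β * x 1 - c i := by
    intro i x
    simp [hL]
  have hLne : ∀ i, L i ≠ 0 := by
    intro i h
    have key : ∀ x : Fin 2 → K, α * x 0 + β * x 1 - c i = 0 := by
      intro x
      have hx := hLval i x
      rw [h] at hx
      simpa using hx.symm
    have h1 := key ![1, 0]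
    have h2 := key ![0, 0]
    have h3 := key ![0, 1]
    simp only [Matrix.cons_val_zero, Matrix.cons_val_one, Matrix.head_cons] at h1 h2 h3
    rcases hαβ with hα | hβ
    · apply hα; linear_combination h1 - h2
    · apply hβ; linear_combination h3 - h2
  have hPne : P ≠ 0 := Finset.prod_ne_zero_iff.mpr fun i _ => hLne i
  have hPdeg : P.totalDegree ≤ k := by
    refine le_trans (MvPolynomial.totalDegree_finset_prod _ _) ?_
    have : ∀ i : Fin k, (L i).totalDegree ≤ 1 := by
      intro i
      refine le_trans (MvPolynomial.totalDegree_sub _ _) ?_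
      simp only [max_le_iff]
      constructor
      · refine le_trans (MvPolynomial.totalDegree_add _ _) ?_
        simp only [max_le_iff]
        constructor <;>
        · refine le_trans (MvPolynomial.totalDegree_mul _ _) ?_
          simp [MvPolynomial.totalDegree_C, MvPolynomial.totalDegree_X]
      · simp [MvPolynomial.totalDegree_C]
    calc ∑ i, (L i).totalDegree ≤ ∑ _i : Fin k, 1 :=
          Finset.sum_le_sum fun i _ => this i
      _ = k := by simp
  have hvan : ∀ x ∈ E₁, MvPolynomial.aeval x P = 0 := by
    intro x hx
    rw [hE₁, Finset.mem_filter] at hx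
    obtain ⟨-, i, hi⟩ := hx
    rw [hP, map_prod]
    refine Finset.prod_eq_zero (Finset.mem_univ i) ?_
    rw [hLval i x, hi, sub_self]
  -- lower bound for the vanishing space of `E₁`
  have hmk : m - 1 - k + k = m - 1 := by omega
  have hW : (m + 1 - k).choose 2 ≤
      Module.finrank K ↥(vanishSpace K 2 (m - 1) (E₁ : Set (Fin 2 → K))) := by
    have := choose_le_finrank_vanishSpace (K := K) (m - 1 - k) k P hPne hPdeg E₁ hvan
    rw [hmk] at this
    have hnum : m - 1 - k + 2 = m + 1 - k := by omega
    rwa [hnum] at this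
  -- split the vanishing space of `E`
  have hEsplit : E₁ ∪ (E \ E₁) = E :=
    Finset.union_sdiff_of_subset (Finset.filter_subset _ _)
  have hsplit : vanishSpace K 2 (m - 1) (E₁ : Set (Fin 2 → K)) ⊓ ⨅ x ∈ (E \ E₁),
        LinearMap.ker (MvPolynomial.aeval (R := K) x).toLinearMap
      = vanishSpace K 2 (m - 1) (E : Set (Fin 2 → K)) := by
    rw [vanishSpace, vanishSpace, Finset.iInf_coe, Finset.iInf_coe, inf_assoc,
      ← Finset.iInf_union, hEsplit]
  haveI : FiniteDimensional K
      ↥(vanishSpace K 2 (m - 1) (E₁ : Set (Fin 2 → K))) :=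
    Submodule.finiteDimensional_of_le (inf_le_left :
      _ ≤ MvPolynomial.restrictTotalDegree (Fin 2) K (m - 1))
  have hdrop := finrank_le_inf_iInf_ker_add_card
    (vanishSpace K 2 (m - 1) (E₁ : Set (Fin 2 → K)))
    (fun x => (MvPolynomial.aeval (R := K) x).toLinearMap) (E \ E₁)
  rw [hsplit] at hdrop
  have hc1 : E₁.card ≤ E.card := Finset.card_filter_le _ _
  have hc2 : (E \ E₁).card = E.card - E₁.card :=
    Finset.card_sdiff_of_subset (Finset.filter_subset _ _)
  rw [hc2] at hdrop
  omega
end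

section
/- Let K be a field of characteristic 0, n ≥ 2, m ≥ 1, and let H_1, ..., H_m be m distinct parallel affine hyperplanes in K^n. Suppose E ⊆ H_1 ∪ ... ∪ H_m is a finite set with #(E ∩ H_i) ≤ binomial(m-i+n-2, n-2) for all i, and suppose for each i the points E ∩ H_i impose independent conditions on polynomials of degree ≤ m-i on H_i (i.e., the space of degree-≤(m-i) polynomials on H_i ≅ K^{n-1} vanishing on E ∩ H_i has codimension #(E ∩ H_i)). Then E imposes independent conditions on polynomials of degree at most m-1 in K[x_1,...,x_n]: the space of such polynomials vanishing on E has dimension binomial(m+n-1, n) - #E. -/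
open MvPolynomial
open scoped Classical

noncomputable section PHIC

/-- Equiv between degree-≤-D monomial exponents in N variables and Sym. -/
def expEquiv (N D : ℕ) :
    {s : Fin N →₀ ℕ // (s.sum fun _ e => e) ≤ D} ≃ Sym (Fin (N + 1)) D where
  toFun s := ⟨Finsupp.toMultiset (Finsupp.cons (D - s.1.sum fun _ e => e) s.1), by
    rw [Finsupp.card_toMultiset]
    have h0 : ∀ (t : Fin (N+1) →₀ ℕ), (t.sum fun _ e => e) = ∑ i, t i := fun t => by
      rw [Finsupp.sum_fintype]; intro; rfl
    rw [Function.id_def] at *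
    have := h0 (Finsupp.cons (D - s.1.sum fun _ e => e) s.1)
    rw [this, Fin.sum_univ_succ]
    simp only [Finsupp.cons_zero, Finsupp.cons_succ]
    have h1 : (s.1.sum fun _ e => e) = ∑ i, s.1 i := by
      rw [Finsupp.sum_fintype]; intro; rfl
    have := s.2
    omega⟩
  invFun m := ⟨Finsupp.tail (Multiset.toFinsupp (m : Multiset (Fin (N+1)))), by
    have hs : ((Multiset.toFinsupp (m : Multiset (Fin (N+1)))).sum fun _ e => e) = D := by
      have := Finsupp.card_toMultiset (Multiset.toFinsupp (m : Multiset (Fin (N+1))))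
      rw [show (fun (_ : Fin (N+1)) (e : ℕ) => e) = fun _ => id from rfl, ← this,
        Multiset.toFinsupp_toMultiset]
      exact m.2
    set t := Multiset.toFinsupp (m : Multiset (Fin (N+1)))
    have h0 : (t.sum fun _ e => e) = ∑ i, t i := by rw [Finsupp.sum_fintype]; intro; rfl
    have h1 : ((Finsupp.tail t).sum fun _ e => e) = ∑ i, Finsupp.tail t i := by
      rw [Finsupp.sum_fintype]; intro; rfl
    rw [h1]
    rw [h0, Fin.sum_univ_succ] at hs
    have : ∑ i, Finsupp.tail t i = ∑ i : Fin N, t i.succ := rfl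
    omega⟩
  left_inv s := by
    apply Subtype.ext
    simp [Finsupp.toMultiset_toFinsupp, Finsupp.tail_cons]
  right_inv m := by
    apply Subtype.ext
    simp only []
    have ht : ((Multiset.toFinsupp (m : Multiset (Fin (N+1)))).sum fun _ e => e) = D := by
      have := Finsupp.card_toMultiset (Multiset.toFinsupp (m : Multiset (Fin (N+1))))
      rw [show (fun (_ : Fin (N+1)) (e : ℕ) => e) = fun _ => id from rfl, ← this,
        Multiset.toFinsupp_toMultiset]
      exact m.2
    set t := Multiset.toFinsupp (m : Multiset (Fin (N+1))) with hdef
    have hγ : D - ((Finsupp.tail t).sum fun _ e => e) = t 0 := by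
      have h0 : (t.sum fun _ e => e) = ∑ i, t i := by rw [Finsupp.sum_fintype]; intro; rfl
      have h1 : ((Finsupp.tail t).sum fun _ e => e) = ∑ i : Fin N, t i.succ := by
        rw [Finsupp.sum_fintype]; · rfl
        intro; rfl
      rw [h0, Fin.sum_univ_succ] at ht
      omega
    rw [hγ, Finsupp.cons_tail, Multiset.toFinsupp_toMultiset]
    rfl

lemma finrank_restrictTotalDegree (K : Type*) [Field K] (N D : ℕ) :
    Module.finrank K (restrictTotalDegree (Fin N) K D) = (D + N).choose N := by
  haveI : Fintype {s : Fin N →₀ ℕ // (s.sum fun _ e => e) ≤ D} :=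
    Fintype.ofEquiv _ (expEquiv N D).symm
  have hb : Module.finrank K (restrictTotalDegree (Fin N) K D) =
      Fintype.card {s : Fin N →₀ ℕ // (s.sum fun _ e => e) ≤ D} :=
    Module.finrank_eq_card_basis
      (basisRestrictSupport K {s : Fin N →₀ ℕ | (s.sum fun _ e => e) ≤ D})
  rw [hb, Fintype.card_congr (expEquiv N D), Sym.card_sym_eq_choose]
  rw [Fintype.card_fin]
  have h1 : N + 1 + D - 1 = N + D := by omega
  rw [h1, ← Nat.choose_symm (by omega : D ≤ N + D), show N + D - D = N from by omega,
    Nat.add_comm]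

lemma totalDegree_aeval_le_one {K : Type*} [CommRing K] {σ τ : Type*}
    (P : σ → MvPolynomial τ K) (hP : ∀ j, (P j).totalDegree ≤ 1)
    (g : MvPolynomial σ K) : (aeval P g).totalDegree ≤ g.totalDegree := by
  conv_lhs => rw [g.as_sum]
  rw [map_sum]
  refine (totalDegree_finset_sum _ _).trans ?_
  rw [Finset.sup_le_iff]
  intro s hs
  rw [aeval_monomial]
  refine (totalDegree_mul _ _).trans ?_
  have h1 : (algebraMap K (MvPolynomial τ K) (coeff s g)).totalDegree = 0 :=
    totalDegree_C _
  rw [h1, zero_add]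
  refine le_trans ?_ (le_totalDegree hs)
  rw [Finsupp.prod]
  refine (totalDegree_finset_prod _ _).trans ?_
  rw [Finsupp.sum]
  refine Finset.sum_le_sum ?_
  intro i _
  refine (totalDegree_pow _ _).trans ?_
  calc s i * (P i).totalDegree ≤ s i * 1 := Nat.mul_le_mul_left _ (hP i)
    _ = s i := Nat.mul_one _

/-- The polynomial representing a linear functional. -/
def linPoly {K : Type*} [CommRing K] {n : ℕ} (μ : (Fin n → K) →ₗ[K] K) :
    MvPolynomial (Fin n) K :=
  ∑ k, C (μ (Pi.single k 1)) * X k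

lemma aeval_linPoly {K : Type*} [Field K] {n : ℕ} (μ : (Fin n → K) →ₗ[K] K)
    (x : Fin n → K) : aeval x (linPoly μ) = μ x := by
  have hx : x = ∑ i, x i • (Pi.single i 1 : Fin n → K) := by
    ext j; simp [Pi.single_apply]
  calc aeval x (linPoly μ) = ∑ k, μ (Pi.single k 1) * x k := by
        rw [linPoly, map_sum]; simp
    _ = μ x := by
        conv_rhs => rw [hx]
        rw [map_sum]
        simp [mul_comm]

lemma totalDegree_linPoly_le {K : Type*} [Field K] {n : ℕ}
    (μ : (Fin n → K) →ₗ[K] K) : (linPoly μ).totalDegree ≤ 1 := by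
  refine (totalDegree_finset_sum _ _).trans ?_
  rw [Finset.sup_le_iff]
  intro k _
  refine (totalDegree_mul _ _).trans ?_
  rw [totalDegree_C, totalDegree_X]


variable (K : Type*) [Field K]

/-- Evaluation map on a set of points, restricted to low-degree polynomials. -/
def evalMapOn (n D : ℕ) (S : Set (Fin n → K)) :
    restrictTotalDegree (Fin n) K D →ₗ[K] (S → K) :=
  LinearMap.pi fun x => ((aeval (x : Fin n → K)).toLinearMap).comp
    (restrictTotalDegree (Fin n) K D).subtype

@[simp] lemma evalMapOn_apply (n D : ℕ) (S : Set (Fin n → K))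
    (f : restrictTotalDegree (Fin n) K D) (x : S) :
    evalMapOn K n D S f x = aeval (x : Fin n → K) (f : MvPolynomial (Fin n) K) := rfl

lemma ker_evalMapOn (n D : ℕ) (S : Set (Fin n → K)) :
    LinearMap.ker (evalMapOn K n D S) =
      Submodule.comap (restrictTotalDegree (Fin n) K D).subtype (vanishSpace K n D S) := by
  ext f
  simp only [LinearMap.mem_ker, Submodule.mem_comap, vanishSpace, Submodule.mem_inf,
    Submodule.mem_iInf, LinearMap.mem_ker, Submodule.coe_subtype, funext_iff]
  constructor
  · intro h
    refine ⟨f.2, fun x hx => h ⟨x, hx⟩⟩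
  · intro h x
    exact h.2 x x.2

lemma finrank_vanishSpace_ker (n D : ℕ) (S : Set (Fin n → K)) :
    Module.finrank K (LinearMap.ker (evalMapOn K n D S)) =
      Module.finrank K (vanishSpace K n D S) := by
  rw [ker_evalMapOn]
  have hle : vanishSpace K n D S ≤ restrictTotalDegree (Fin n) K D := inf_le_left
  exact LinearEquiv.finrank_eq (Submodule.comapSubtypeEquivOfLe hle)

lemma rank_relation (n D : ℕ) (S : Set (Fin n → K)) [Fintype S] :
    Module.finrank K (LinearMap.range (evalMapOn K n D S)) +
      Module.finrank K (vanishSpace K n D S) = (D + n).choose n := by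
  have h := LinearMap.finrank_range_add_finrank_ker (evalMapOn K n D S)
  rw [finrank_vanishSpace_ker, finrank_restrictTotalDegree K n D] at h
  exact h

lemma evalMapOn_surjective (n D : ℕ) (S : Set (Fin n → K)) [Fintype S]
    (h : Module.finrank K (vanishSpace K n D S) = (D + n).choose n - Fintype.card S)
    (hle : Fintype.card S ≤ (D + n).choose n) :
    Function.Surjective (evalMapOn K n D S) := by
  have hr := rank_relation K n D S
  rw [h] at hr
  have hcard : Module.finrank K (LinearMap.range (evalMapOn K n D S)) = Fintype.card S := by
    omega
  rw [← LinearMap.range_eq_top]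
  apply Submodule.eq_top_of_finrank_eq
  rw [hcard, Module.finrank_pi]


end PHIC

/-- Lemma ("anynaf", condition 2, affine version): let `H_1, …, H_m` be distinct parallel
affine hyperplanes in `K^n` (cut out by `ℓ(x) = c_i` for a nonzero linear form `ℓ`), each
parametrized by an injective affine map `φ i : K^{n-1} → K^n` with image `H_i`. If
`E ⊆ H_1 ∪ ⋯ ∪ H_m` is finite with `#(E ∩ H_i) ≤ C(m-i+n-2, n-2)`, and for each `i` the
points of `E ∩ H_i` impose independent conditions on polynomials of degree `≤ m-i` on
`H_i ≅ K^{n-1}`, then `E` imposes independent conditions on polynomials of degree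
`≤ m-1` in `n` variables: the vanishing space has dimension `C(m+n-1, n) - #E`. -/
theorem parallel_hyperplanes_impose_independent_conditions {K : Type*} [Field K] [CharZero K]
    (n m : ℕ) (hn : 2 ≤ n) (hm : 1 ≤ m)
    (ℓ : ((Fin n → K) →ₗ[K] K)) (hℓ : ℓ ≠ 0)
    (c : Fin m → K) (hc : Function.Injective c)
    (φ : Fin m → ((Fin (n - 1) → K) →ᵃ[K] (Fin n → K)))
    (hφinj : ∀ i, Function.Injective (φ i))
    (hφmem : ∀ i y, ℓ (φ i y) = c i)
    (hφsurj : ∀ i x, ℓ x = c i → ∃ y, φ i y = x)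
    (E : Finset (Fin n → K))
    (hE : ∀ x ∈ E, ∃ i : Fin m, ℓ x = c i)
    (hcard : ∀ i : Fin m, (E.filter (fun x => ℓ x = c i)).card ≤
      (m - ((i : ℕ) + 1) + n - 2).choose (n - 2))
    (hind : ∀ i : Fin m,
      Module.finrank K ↥(vanishSpace K (n - 1) (m - ((i : ℕ) + 1))
          {y : Fin (n - 1) → K | φ i y ∈ E}) =
        (m - ((i : ℕ) + 1) + n - 1).choose (n - 1) -
          (E.filter (fun x => ℓ x = c i)).card) :
    Module.finrank K ↥(vanishSpace K n (m - 1) (E : Set (Fin n → K))) =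
      (m + n - 1).choose n - E.card := by
  classical
  set D := m - 1 with hD
  set ι := ↥(E : Set (Fin n → K)) with hι
  have hlvl_ex : ∀ e : ι, ∃ i : Fin m, ℓ (e : Fin n → K) = c i :=
    fun e => hE e (Finset.mem_coe.mp e.2)
  choose lvl hlvl using hlvl_ex
  set u : Fin m → K := fun i => ∏ j ∈ Finset.Iio i, (c i - c j) with hu
  have hu0 : ∀ i, u i ≠ 0 := by
    intro i
    rw [hu]
    refine Finset.prod_ne_zero_iff.mpr (fun j hj => sub_ne_zero.mpr ?_)
    intro hcij
    exact (ne_of_gt (Finset.mem_Iio.mp hj)) (hc hcij)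
  -- the interpolating family
  have key : ∀ e : ι, ∃ F : MvPolynomial (Fin n) K,
      F ∈ restrictTotalDegree (Fin n) K D ∧
      (∀ x : ι, lvl x = lvl e →
        aeval (x : Fin n → K) F = if (x : Fin n → K) = (e : Fin n → K) then u (lvl e) else 0) ∧
      (∀ x : ι, (lvl x : ℕ) < (lvl e : ℕ) → aeval (x : Fin n → K) F = 0) := by
    intro e
    set i := lvl e with hi
    set S : Set (Fin (n - 1) → K) := {y | φ i y ∈ E} with hS
    have hSfin : S.Finite := Set.Finite.preimage (hφinj i).injOn E.finite_toSet
    haveI : Fintype ↥S := hSfin.fintype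
    have hbij : Function.Bijective (fun y : ↥S =>
        (⟨φ i y.1, Finset.mem_filter.mpr ⟨y.2, hφmem i y.1⟩⟩ :
          ↥(E.filter (fun x => ℓ x = c i)))) := by
      constructor
      · intro y1 y2 h12
        exact Subtype.ext (hφinj i (congrArg Subtype.val h12))
      · rintro ⟨x, hx⟩
        obtain ⟨hxE, hxl⟩ := Finset.mem_filter.mp hx
        obtain ⟨y, hy⟩ := hφsurj i x hxl
        refine ⟨⟨y, ?_⟩, Subtype.ext hy⟩
        rw [hS]
        simp only [Set.mem_setOf_eq, hy]
        exact hxE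
    have hScard : Fintype.card ↥S = (E.filter (fun x => ℓ x = c i)).card := by
      rw [Fintype.card_congr (Equiv.ofBijective _ hbij), Fintype.card_coe]
    have hle : Fintype.card ↥S ≤ ((m - ((i : ℕ) + 1)) + (n - 1)).choose (n - 1) := by
      rw [hScard]
      refine (hcard i).trans ?_
      have e1 : (m - ((i : ℕ) + 1)) + (n - 1) = (m - ((i : ℕ) + 1) + n - 2) + 1 := by omega
      have e2 : n - 1 = (n - 2) + 1 := by omega
      rw [e1, e2, Nat.choose_succ_succ]
      exact Nat.le_add_right _ _
    have hsurj : Function.Surjective (evalMapOn K (n - 1) (m - ((i : ℕ) + 1)) S) := by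
      refine evalMapOn_surjective K _ _ _ ?_ hle
      rw [hScard]
      have hfull : (m - ((i : ℕ) + 1)) + (n - 1) = m - ((i : ℕ) + 1) + n - 1 := by omega
      rw [hfull]
      exact hind i
    obtain ⟨g, hg⟩ := hsurj (fun y => if φ i y.1 = (e : Fin n → K) then 1 else 0)
    have hker : LinearMap.ker (φ i).linear = ⊥ := by
      rw [LinearMap.ker_eq_bot]
      intro a b hab
      apply hφinj i
      rw [AffineMap.decomp (φ i)]
      simp only [Pi.add_apply, Function.const_apply, hab]
    obtain ⟨ψlin, hψ⟩ := LinearMap.exists_leftInverse_of_injective _ hker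
    have hψ' : ∀ y, ψlin ((φ i).linear y) = y := fun y => by
      have := LinearMap.congr_fun hψ y
      simpa using this
    set P : Fin (n - 1) → MvPolynomial (Fin n) K :=
      fun j => linPoly ((LinearMap.proj j).comp ψlin) - C (ψlin (φ i 0) j) with hP
    have hPdeg : ∀ j, (P j).totalDegree ≤ 1 :=
      fun j => (totalDegree_sub_C_le _ _).trans (totalDegree_linPoly_le _)
    have hPeval : ∀ (x : Fin n → K) j, aeval x (P j) = ψlin x j - ψlin (φ i 0) j := by
      intro x j
      rw [hP]
      simp only [map_sub, aeval_C, aeval_linPoly]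
      rfl
    set G := aeval P (g : MvPolynomial (Fin (n - 1)) K) with hG
    have hGdeg : G.totalDegree ≤ m - ((i : ℕ) + 1) :=
      (totalDegree_aeval_le_one P hPdeg _).trans ((mem_restrictTotalDegree _ _ _).mp g.2)
    have hGeval : ∀ y, aeval (φ i y) G = aeval y (g : MvPolynomial (Fin (n - 1)) K) := by
      intro y
      rw [hG]
      calc aeval (φ i y) (aeval P (g : MvPolynomial (Fin (n - 1)) K))
          = aeval (fun j => aeval (φ i y) (P j)) (g : MvPolynomial (Fin (n - 1)) K) := by
            rw [← AlgHom.comp_apply, comp_aeval]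
        _ = aeval y (g : MvPolynomial (Fin (n - 1)) K) := by
            have hdec : φ i y - φ i 0 = (φ i).linear y := by
              rw [AffineMap.decomp (φ i)]
              simp
            have hy : ψlin (φ i y) - ψlin (φ i 0) = y := by
              rw [← map_sub, hdec, hψ' y]
            have hyy : (fun j => aeval (φ i y) (P j)) = y := by
              funext j
              rw [hPeval]
              calc ψlin (φ i y) j - ψlin (φ i 0) j = (ψlin (φ i y) - ψlin (φ i 0)) j := rfl
                _ = y j := by rw [hy]
            rw [hyy]
    have hprodeval : ∀ x : Fin n → K,
        aeval x (∏ j ∈ Finset.Iio i, (linPoly ℓ - C (c j))) =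
          ∏ j ∈ Finset.Iio i, (ℓ x - c j) := by
      intro x
      rw [map_prod]
      refine Finset.prod_congr rfl fun j _ => ?_
      rw [map_sub, aeval_C, aeval_linPoly]
      rfl
    refine ⟨G * ∏ j ∈ Finset.Iio i, (linPoly ℓ - C (c j)), ?_, ?_, ?_⟩
    · rw [mem_restrictTotalDegree]
      refine (totalDegree_mul _ _).trans ?_
      have hprod : (∏ j ∈ Finset.Iio i, (linPoly ℓ - C (c j))).totalDegree ≤ (i : ℕ) := by
        refine (totalDegree_finset_prod _ _).trans ?_
        refine le_trans (Finset.sum_le_sum fun j _ =>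
          (totalDegree_sub_C_le _ _).trans (totalDegree_linPoly_le ℓ)) ?_
        rw [Finset.sum_const, smul_eq_mul, mul_one, Fin.card_Iio]
      have hilt := i.isLt
      refine le_trans (Nat.add_le_add hGdeg hprod) (by omega)
    · intro x hx
      have hx1 : ℓ (x : Fin n → K) = c i := by rw [hlvl x, hx]
      obtain ⟨y, hy⟩ := hφsurj i x hx1
      have hyS : y ∈ S := by
        rw [hS]
        simp only [Set.mem_setOf_eq, hy]
        exact Finset.mem_coe.mp x.2
      rw [map_mul, hprodeval]
      have h1 : aeval (x : Fin n → K) G = if (x : Fin n → K) = (e : Fin n → K) then 1 else 0 := by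
        rw [← hy, hGeval y]
        have hgv := congrFun hg ⟨y, hyS⟩
        rw [evalMapOn_apply] at hgv
        rw [hgv]
      rw [h1, hx1]
      by_cases hxe : (x : Fin n → K) = (e : Fin n → K) <;> simp [hxe, hu]
    · intro x hxlt
      rw [map_mul, hprodeval]
      have h0 : ∏ j ∈ Finset.Iio i, (ℓ (x : Fin n → K) - c j) = 0 := by
        refine Finset.prod_eq_zero (Finset.mem_Iio.mpr (show lvl x < i from hxlt)) ?_
        rw [hlvl x, sub_self]
      rw [h0, mul_zero]
  choose F hFdeg hFeq hFlt using key
  set v : ι → (ι → K) := fun e => evalMapOn K n D (E : Set (Fin n → K)) ⟨F e, hFdeg e⟩ with hv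
  have hveval : ∀ e x : ι, v e x = aeval (x : Fin n → K) (F e) := fun e x => rfl
  have hindep : LinearIndependent K v := by
    rw [Fintype.linearIndependent_iff]
    intro a ha
    have main : ∀ N : ℕ, ∀ e : ι, (lvl e : ℕ) = N → a e = 0 := by
      intro N
      induction N using Nat.strong_induction_on with
      | _ N IH =>
        intro e hlvle
        have hev : ∑ e' : ι, a e' * v e' e = 0 := by
          have := congrFun ha e
          simpa [Finset.sum_apply] using this
        have hsingle : ∑ e' : ι, a e' * v e' e = a e * u (lvl e) := by
          rw [Finset.sum_eq_single e]
          · rw [hveval, hFeq e e rfl, if_pos rfl]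
          · intro e' _ hne
            rcases lt_trichotomy (lvl e' : ℕ) N with h | h | h
            · rw [IH _ h e' rfl, zero_mul]
            · have hl : lvl e = lvl e' := Fin.ext (by omega)
              rw [hveval, hFeq e' e hl, if_neg, mul_zero]
              intro hxy
              exact hne (Subtype.ext hxy).symm
            · rw [hveval, hFlt e' e (by omega), mul_zero]
          · intro h
            exact absurd (Finset.mem_univ e) h
        rw [hsingle] at hev
        exact (mul_eq_zero.mp hev).resolve_right (hu0 (lvl e))
    intro e
    exact main (lvl e) e rfl
  -- cardinality of ι
  have hcardι : Fintype.card ι = E.card := by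
    rw [Fintype.card_congr (Equiv.subtypeEquivRight (fun x => Finset.mem_coe))]
    exact Fintype.card_coe E
  -- rank bounds
  have hspan : Submodule.span K (Set.range v) ≤
      LinearMap.range (evalMapOn K n D (E : Set (Fin n → K))) := by
    rw [Submodule.span_le]
    rintro _ ⟨e, rfl⟩
    exact ⟨⟨F e, hFdeg e⟩, rfl⟩
  have h1 : E.card ≤
      Module.finrank K (LinearMap.range (evalMapOn K n D (E : Set (Fin n → K)))) := by
    rw [← hcardι, ← finrank_span_eq_card hindep]
    exact Submodule.finrank_mono hspan
  have h2 : Module.finrank K (LinearMap.range (evalMapOn K n D (E : Set (Fin n → K)))) ≤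
      E.card := by
    refine le_trans (Submodule.finrank_le _) ?_
    rw [Module.finrank_pi, hcardι]
  have hr := rank_relation K n D (E : Set (Fin n → K))
  have harith : (D + n).choose n = (m + n - 1).choose n := by
    congr 1
    omega
  rw [harith] at hr
  omega
end

section
/- Let K be a field of characteristic 0, n ≥ 2, m ≥ 1, k ≤ m, and H_1, ..., H_k distinct parallel affine hyperplanes in K^n. If E ⊆ K^n is a finite set with #E ≤ binomial(m+n-1, n) and #(E ∩ (H_1 ∪ ... ∪ H_k)) > binomial(m+n-1, n) - binomial(m-k+n-1, n), then there exists a nonzero polynomial of degree ≤ m-1 vanishing on E ∩ (H_1 ∪ ... ∪ H_k); in particular E does not impose independent conditions on polynomials of degree ≤ m-1. -/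
open MvPolynomial
open scoped Classical

section Aux

variable {K : Type*} [Field K]

lemma aux_card_sum_le (n D : ℕ) :
    Nat.card {s : Fin n →₀ ℕ // (s.sum fun _ e => e) ≤ D} = (D + n).choose n := by
  classical
  have e1 : {s : Fin n →₀ ℕ // (s.sum fun _ e => e) ≤ D} ≃ {g : Fin n → ℕ // ∑ i, g i ≤ D} :=
    Finsupp.equivFunOnFinite.subtypeEquiv (fun s => by
      rw [Finsupp.sum_fintype _ _ (fun _ => rfl)]
      exact Iff.rfl)
  have e2 : {g : Fin n → ℕ // ∑ i, g i ≤ D} ≃ {h : Fin (n+1) → ℕ // ∑ i, h i = D} :=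
    { toFun := fun g => ⟨Fin.snoc g.1 (D - ∑ i, g.1 i), by
        have hg := g.2
        rw [Fin.sum_univ_castSucc]
        simp only [Fin.snoc_castSucc, Fin.snoc_last]
        omega⟩
      invFun := fun h => ⟨fun i => h.1 i.castSucc, by
        have hh := h.2
        rw [Fin.sum_univ_castSucc] at hh
        have hb : ∑ i : Fin n, (fun i : Fin n => h.1 i.castSucc) i
            = ∑ i : Fin n, h.1 i.castSucc := rfl
        omega⟩
      left_inv := fun g => by
        ext i
        simp [Fin.snoc_castSucc]
      right_inv := fun h => by
        have hh := h.2
        rw [Fin.sum_univ_castSucc] at hh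
        ext i
        refine Fin.lastCases ?_ (fun j => ?_) i
        · simp only [Fin.snoc_last]
          omega
        · simp [Fin.snoc_castSucc] }
  have e3 : {h : Fin (n+1) → ℕ // ∑ i, h i = D} ≃
      {f : Fin (n+1) →₀ ℕ // (f.sum fun _ e => e) = D} :=
    ((Finsupp.equivFunOnFinite : (Fin (n+1) →₀ ℕ) ≃ (Fin (n+1) → ℕ))).symm.subtypeEquiv (fun h => by
      rw [Finsupp.sum_fintype _ _ (fun _ => rfl)]
      exact Iff.rfl)
  have e4 : {f : Fin (n+1) →₀ ℕ // (f.sum fun _ e => e) = D} ≃ Sym (Fin (n+1)) D :=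
    (Multiset.toFinsupp (α := Fin (n+1))).toEquiv.symm.subtypeEquiv (fun f => by
      rw [show ((Multiset.toFinsupp (α := Fin (n+1))).toEquiv.symm f : Multiset (Fin (n+1)))
          = Finsupp.toMultiset f from rfl]
      rw [Finsupp.card_toMultiset]
      exact Iff.rfl)
  rw [Nat.card_congr (((e1.trans e2).trans e3).trans e4), Nat.card_eq_fintype_card,
    Sym.card_sym_eq_choose]
  rw [Fintype.card_fin]
  have h1 : n + 1 + D - 1 = n + D := by omega
  rw [h1]
  have h2 : (n + D).choose D = (n + D).choose n := by
    have := Nat.choose_symm (n := n + D) (k := D) (Nat.le_add_left _ _)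
    simpa using this.symm
  rw [h2, Nat.add_comm]

lemma aux_finrank_rtd (n D : ℕ) :
    Module.finrank K (restrictTotalDegree (Fin n) K D) = (D + n).choose n := by
  have hbasis := Module.finrank_eq_nat_card_basis
    (MvPolynomial.basisRestrictSupport (R := K)
      {s : Fin n →₀ ℕ | (s.sum fun _ e => e) ≤ D})
  rw [show MvPolynomial.restrictSupport K {s : Fin n →₀ ℕ | (s.sum fun _ e => e) ≤ D}
      = restrictTotalDegree (Fin n) K D from rfl] at hbasis
  rw [hbasis, ← aux_card_sum_le n D]
  rfl

instance aux_vanish_fd (n D : ℕ) (S : Set (Fin n → K)) :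
    FiniteDimensional K (vanishSpace K n D S) :=
  Submodule.finiteDimensional_of_le (inf_le_left :
    vanishSpace K n D S ≤ restrictTotalDegree (Fin n) K D)

lemma aux_exists_rank (n D : ℕ) (S : Finset (Fin n → K)) :
    ∃ r ≤ S.card,
      Module.finrank K (vanishSpace K n D (S : Set (Fin n → K))) + r =
        Module.finrank K (restrictTotalDegree (Fin n) K D) := by
  classical
  set W := restrictTotalDegree (Fin n) K D with hW
  set Φ := LinearMap.pi (R := K) (fun x : (S : Set (Fin n → K)) =>
      (MvPolynomial.aeval (R := K) (x : Fin n → K)).toLinearMap) with hΦ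
  have hkerΦ : LinearMap.ker Φ =
      ⨅ x ∈ (S : Set (Fin n → K)), LinearMap.ker (MvPolynomial.aeval (R := K) x).toLinearMap := by
    rw [hΦ, LinearMap.ker_pi]
    exact iInf_subtype'' (S : Set (Fin n → K))
      (fun x => LinearMap.ker (MvPolynomial.aeval (R := K) x).toLinearMap)
  set ψ := Φ.comp W.subtype with hψ
  have hker : LinearMap.ker ψ = Submodule.comap W.subtype (vanishSpace K n D S) := by
    rw [hψ, LinearMap.ker_comp, hkerΦ]
    show _ = Submodule.comap W.subtype (W ⊓ _)
    rw [Submodule.comap_inf, Submodule.comap_subtype_self, top_inf_eq]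
  have hrn := LinearMap.finrank_range_add_finrank_ker ψ
  have h2 : Module.finrank K (vanishSpace K n D (S : Set (Fin n → K))) =
      Module.finrank K (LinearMap.ker ψ) := by
    rw [hker]
    have h3 := Submodule.finrank_map_subtype_eq W
      (Submodule.comap W.subtype (vanishSpace K n D (S : Set (Fin n → K))))
    rw [Submodule.map_comap_subtype] at h3
    have hle : vanishSpace K n D (S : Set (Fin n → K)) ≤ W := by
      rw [hW]
      exact inf_le_left
    rw [← h3, inf_eq_right.mpr hle]
  refine ⟨Module.finrank K (LinearMap.range ψ), ?_, ?_⟩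
  · have h4 := Submodule.finrank_le (LinearMap.range ψ)
    rw [Module.finrank_fintype_fun_eq_card] at h4
    simpa using h4
  · rw [h2]
    omega

lemma aux_mul_bound (n D d : ℕ) (S : Finset (Fin n → K)) (p : MvPolynomial (Fin n) K)
    (hp : p ≠ 0) (hpd : p.totalDegree ≤ d) (hdD : d ≤ D)
    (hvan : ∀ x ∈ S, MvPolynomial.aeval (R := K) x p = 0) :
    Module.finrank K (restrictTotalDegree (Fin n) K (D - d)) ≤
      Module.finrank K (vanishSpace K n D (S : Set (Fin n → K))) := by
  classical
  have hmem : ∀ g ∈ restrictTotalDegree (Fin n) K (D - d),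
      p * g ∈ vanishSpace K n D (S : Set (Fin n → K)) := by
    intro g hg
    refine Submodule.mem_inf.mpr ⟨?_, ?_⟩
    · rw [mem_restrictTotalDegree]
      rw [mem_restrictTotalDegree] at hg
      calc (p * g).totalDegree ≤ p.totalDegree + g.totalDegree := totalDegree_mul p g
      _ ≤ D := by omega
    · simp only [Submodule.mem_iInf, LinearMap.mem_ker, AlgHom.toLinearMap_apply, map_mul]
      intro x hx
      rw [hvan x (Finset.mem_coe.mp hx), zero_mul]
  let T : restrictTotalDegree (Fin n) K (D - d) →ₗ[K] vanishSpace K n D (S : Set (Fin n → K)) :=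
    LinearMap.codRestrict _ ((LinearMap.mulLeft K p).comp (Submodule.subtype _))
      (fun g => hmem g.1 g.2)
  have hT : Function.Injective T := by
    intro g₁ g₂ h
    have h' : p * (g₁ : MvPolynomial (Fin n) K) = p * (g₂ : MvPolynomial (Fin n) K) :=
      congrArg Subtype.val h
    exact Subtype.ext (mul_left_cancel₀ hp h')
  exact LinearMap.finrank_le_finrank_of_injective hT

end Aux

/-- Lemma ("anynaf", condition 1, affine version): if `#E ≤ C(m+n-1, n)` and more than
`C(m+n-1,n) - C(m-k+n-1,n)` points of `E` lie on a union of `k ≤ m` distinct parallel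
hyperplanes `{ℓ(x) = c_i}`, then there is a nonzero polynomial of degree `≤ m-1` vanishing
on `E ∩ (H_1 ∪ ⋯ ∪ H_k)`; in particular `E` does not impose independent conditions on
polynomials of degree `≤ m-1`. -/
theorem too_many_points_on_parallel_hyperplanes_special {K : Type*} [Field K] [CharZero K]
    (n m k : ℕ) (hn : 2 ≤ n) (hm : 1 ≤ m) (hk : k ≤ m)
    (ℓ : ((Fin n → K) →ₗ[K] K)) (hℓ : ℓ ≠ 0)
    (c : Fin k → K) (hc : Function.Injective c)
    (E : Finset (Fin n → K)) (hEcard : E.card ≤ (m + n - 1).choose n)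
    (hbig : (m + n - 1).choose n - (m - k + n - 1).choose n <
      (E.filter (fun x => ∃ i : Fin k, ℓ x = c i)).card) :
    (∃ f : MvPolynomial (Fin n) K, f ≠ 0 ∧ f.totalDegree ≤ m - 1 ∧
        ∀ x ∈ E, (∃ i : Fin k, ℓ x = c i) → MvPolynomial.aeval x f = 0) ∧
      (m + n - 1).choose n - E.card <
        Module.finrank K ↥(vanishSpace K n (m - 1) (E : Set (Fin n → K))) := by
  classical
  set E' : Finset (Fin n → K) := E.filter (fun x => ∃ i : Fin k, ℓ x = c i) with hE'
  have hE'sub : E' ⊆ E := Finset.filter_subset _ _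
  have hN'N : E'.card ≤ E.card := Finset.card_le_card hE'sub
  -- the linear polynomial representing ℓ
  set L : MvPolynomial (Fin n) K := ∑ j, C (ℓ (Pi.single j 1)) * X j with hL
  have hLeval : ∀ x : Fin n → K, MvPolynomial.aeval (R := K) x L = ℓ x := by
    intro x
    rw [LinearMap.pi_apply_eq_sum_univ ℓ x, hL]
    simp only [map_sum, map_mul, aeval_C, aeval_X, smul_eq_mul, Algebra.algebraMap_self_apply]
    refine Finset.sum_congr rfl fun j _ => ?_
    have hfun : (fun j' => if j = j' then (1 : K) else 0) = Pi.single j (1 : K) := by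
      funext j'
      rw [Pi.single_apply]
      by_cases h : j = j'
      · subst h; simp
      · rw [if_neg (Ne.symm h), if_neg h]
    rw [hfun, mul_comm]
  set p : MvPolynomial (Fin n) K := ∏ i : Fin k, (L - C (c i)) with hp
  have hpeval : ∀ x : Fin n → K, MvPolynomial.aeval (R := K) x p = ∏ i : Fin k, (ℓ x - c i) := by
    intro x
    rw [hp, map_prod]
    refine Finset.prod_congr rfl fun i _ => ?_
    rw [map_sub, aeval_C, hLeval, Algebra.algebraMap_self_apply]
  have hp0 : p ≠ 0 := by
    rw [hp]
    refine Finset.prod_ne_zero_iff.mpr fun i _ => ?_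
    intro h0
    apply hℓ
    have hx : ∀ x : Fin n → K, ℓ x = c i := by
      intro x
      have h1 := congrArg (MvPolynomial.aeval (R := K) x) h0
      rw [map_sub, aeval_C, hLeval, Algebra.algebraMap_self_apply, map_zero] at h1
      exact sub_eq_zero.mp h1
    have h0' : c i = 0 := by rw [← hx 0, map_zero]
    refine LinearMap.ext fun x => ?_
    simp [hx x, h0']
  have hpdeg : p.totalDegree ≤ k := by
    rw [hp]
    refine (totalDegree_finset_prod _ _).trans ?_
    calc ∑ i : Fin k, (L - C (c i)).totalDegree ≤ ∑ _i : Fin k, 1 := by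
          refine Finset.sum_le_sum fun i _ => ?_
          refine (totalDegree_sub_C_le _ _).trans ?_
          rw [hL]
          refine (totalDegree_finset_sum _ _).trans ?_
          refine Finset.sup_le fun j _ => ?_
          calc (C (ℓ (Pi.single j 1)) * X j).totalDegree ≤
              (C (ℓ (Pi.single j 1))).totalDegree + (X j : MvPolynomial (Fin n) K).totalDegree :=
                totalDegree_mul _ _
          _ ≤ 1 := by rw [totalDegree_C, totalDegree_X]
    _ = k := by simp
  have hvanp : ∀ x ∈ E', MvPolynomial.aeval (R := K) x p = 0 := by
    intro x hx
    rw [hpeval]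
    obtain ⟨-, i, hi⟩ := Finset.mem_filter.mp hx
    exact Finset.prod_eq_zero (Finset.mem_univ i) (by rw [hi, sub_self])
  have hWrank : Module.finrank K (restrictTotalDegree (Fin n) K (m - 1)) =
      (m + n - 1).choose n := by
    rw [aux_finrank_rtd]
    congr 1
    omega
  rcases lt_or_ge k m with hkm | hkm
  · -- main case k < m
    constructor
    · exact ⟨p, hp0, hpdeg.trans (by omega),
        fun x hx hex => hvanp x (Finset.mem_filter.mpr ⟨hx, hex⟩)⟩
    · obtain ⟨r1, hr1le, hr1⟩ := aux_exists_rank n (m - 1) E'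
      obtain ⟨r2, hr2le, hr2⟩ := aux_exists_rank n (m - 1) (E \ E')
      rw [hWrank] at hr1 hr2
      rw [Finset.card_sdiff_of_subset hE'sub] at hr2le
      have hb : (m - k + n - 1).choose n ≤
          Module.finrank K (vanishSpace K n (m - 1) (E' : Set (Fin n → K))) := by
        have h4 := aux_mul_bound n (m - 1) k E' p hp0 hpdeg (by omega) hvanp
        rw [aux_finrank_rtd] at h4
        have h5 : (m - 1 - k + n).choose n = (m - k + n - 1).choose n := by
          congr 1
          omega
        rw [h5] at h4
        exact h4
      have hsplit : vanishSpace K n (m - 1) ((E' : Set (Fin n → K))) ⊓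
          vanishSpace K n (m - 1) (((E \ E' : Finset (Fin n → K)) : Set (Fin n → K)))
          = vanishSpace K n (m - 1) ((E : Set (Fin n → K))) := by
        unfold vanishSpace
        rw [← inf_inf_distrib_left, ← iInf_union]
        have hsets : ((E' : Set (Fin n → K)) ∪ ((E \ E' : Finset (Fin n → K)) : Set (Fin n → K)))
            = (E : Set (Fin n → K)) := by
          rw [← Finset.coe_union, Finset.union_sdiff_of_subset hE'sub]
        rw [hsets]
      have hsupinf := Submodule.finrank_sup_add_finrank_inf_eq
        (vanishSpace K n (m - 1) ((E' : Set (Fin n → K))))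
        (vanishSpace K n (m - 1) (((E \ E' : Finset (Fin n → K)) : Set (Fin n → K))))
      rw [hsplit] at hsupinf
      have hsup_le : Module.finrank K
          ↥((vanishSpace K n (m - 1) ((E' : Set (Fin n → K)))) ⊔
            (vanishSpace K n (m - 1) (((E \ E' : Finset (Fin n → K)) : Set (Fin n → K))))) ≤
          (m + n - 1).choose n := by
        rw [← hWrank]
        exact Submodule.finrank_mono (sup_le inf_le_left inf_le_left)
      omega
  · -- degenerate case k = m: hypotheses are contradictory
    exfalso
    have hb0 : (m - k + n - 1).choose n = 0 := by
      have hkm' : k = m := le_antisymm hk hkm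
      subst hkm'
      refine Nat.choose_eq_zero_of_lt ?_
      omega
    rw [hb0, Nat.sub_zero] at hbig
    omega
end
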